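/- If G is a bi-orderable group with bi-order <, then the set of formal power series over a ring R with well-ordered support (the Malcev–Neumann set R*_< G) is closed under the convolution product: the product of two elements with well-ordered support has well-ordered support, and for each group element only finitely many pairs contribute to its coefficient. -/

import Mathlib

open Pointwise

section Aux

variable {G : Type*} [Group G] [LinearOrder G]
    [CovariantClass G G (· * ·) (· < ·)]
    [CovariantClass G G (Function.swap (· * ·)) (· < ·)]

lemma aux_antidiag_finite {A B : Set G} (hA : A.IsWF) (hB : B.IsWF) (g : G) :
    {h : G | h ∈ A ∧ h⁻¹ * g ∈ B}.Finite := by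
  by_contra hinf
  have hinf : {h : G | h ∈ A ∧ h⁻¹ * g ∈ B}.Infinite := hinf
  set X := {h : G | h ∈ A ∧ h⁻¹ * g ∈ B}
  let f : ℕ ↪ X := hinf.natEmbedding
  obtain ⟨φ, hφ⟩ := hA.isPWO.exists_monotone_subseq (f := fun n => (f n : G))
    (fun n => (f n).2.1)
  -- the first coordinates are injective and monotone along φ, hence strictly monotone
  have hmono : Monotone fun n => ((f (φ n) : X) : G) := fun _ _ hmn => hφ hmn
  have hinj : Function.Injective fun n => ((f (φ n) : X) : G) := by
    intro m n hmn
    exact φ.injective (f.injective (Subtype.ext hmn))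
  have hstrict : StrictMono fun n => ((f (φ n) : X) : G) :=
    hmono.strictMono_of_injective hinj
  -- then h⁻¹ * g is strictly decreasing in B, contradicting well-foundedness
  have : ∃ fseq : ℕ → G, StrictAnti fseq ∧ ∀ n, fseq n ∈ B := by
    refine ⟨fun n => ((f (φ n) : X) : G)⁻¹ * g, ?_, fun n => (f (φ n)).2.2⟩
    intro m n hmn
    exact mul_lt_mul_left (inv_lt_inv_iff.2 (hstrict hmn)) g
  obtain ⟨fseq, hanti, hmem⟩ := this
  rw [Set.isWF_iff_no_descending_seq] at hB
  exact hB fseq hanti hmem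

lemma aux_mul_isWF {A B : Set G} (hA : A.IsWF) (hB : B.IsWF) : (A * B).IsWF := by
  haveI := covariantClass_le_of_lt G G (· * ·)
  haveI := covariantClass_le_of_lt G G (Function.swap (· * ·))
  rw [Set.isWF_iff_no_descending_seq]
  rintro f hf hmem
  choose a ha b hb hab using fun n => Set.mem_mul.mp (hmem n)
  obtain ⟨φ, hφ⟩ := hA.isPWO.exists_monotone_subseq (f := a) ha
  obtain ⟨ψ, hψ⟩ := hB.isPWO.exists_monotone_subseq (f := b ∘ φ) (fun n => hb _)
  have : f (φ (ψ 0)) ≤ f (φ (ψ 1)) := by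
    have h0 := (hab (φ (ψ 0))).symm
    have h1 := hab (φ (ψ 1))
    refine h0.trans_le (le_of_le_of_eq ?_ h1)
    exact mul_le_mul' (hφ (ψ.monotone zero_le_one)) (hψ zero_le_one)
  exact absurd this (not_le_of_gt (hf (φ.strictMono (ψ.strictMono zero_lt_one))))

end Aux

/-- If `r` and `s` are formal series (coefficient functions) on a bi-ordered
group with well-ordered support, then for each `g` only finitely many pairs
contribute to the `g`-coefficient of the convolution, and the convolution has
well-ordered support. -/
theorem malcevNeumann_convolution_closed {G R : Type*} [Group G]
    [LinearOrder G] [CovariantClass G G (· * ·) (· < ·)]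
    [CovariantClass G G (Function.swap (· * ·)) (· < ·)] [Ring R]
    (r s : G → R) (hr : (Function.support r).IsWF)
    (hs : (Function.support s).IsWF) :
    (∀ g : G, {h : G | r h ≠ 0 ∧ s (h⁻¹ * g) ≠ 0}.Finite) ∧
    (Function.support fun g : G => ∑ᶠ h : G, r h * s (h⁻¹ * g)).IsWF := by
  constructor
  · intro g
    exact aux_antidiag_finite hr hs g
  · refine (aux_mul_isWF hr hs).mono ?_
    intro g hg
    rw [Function.mem_support] at hg
    have : ∃ h : G, r h * s (h⁻¹ * g) ≠ 0 := by
      by_contra hall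
      push_neg at hall
      exact hg (finsum_eq_zero_of_forall_eq_zero hall)
    obtain ⟨h, hh⟩ := this
    exact ⟨h, left_ne_zero_of_mul hh, h⁻¹ * g, right_ne_zero_of_mul hh, by group⟩
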